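/- Let ℓ : ℝ^d → ℝ be continuous with ℓ ≤ 0, attaining its maximum 0 exactly on the finite nonempty set {ξ*_1, …, ξ*_I}, and with ∫_{ℝ^d} exp(ℓ(ξ)/ω) dξ < ∞ for every ω > 0. Fix ε > 0 with ε < min_{i ≠ j} ‖ξ*_i − ξ*_j‖ when I ≥ 2, set K_ε = ∪_{i=1}^I B_ε(ξ*_i), and assume sup_{ξ ∈ ℝ^d ∖ K_ε} ℓ(ξ) < 0. Then for every continuous bounded function f : ℝ^d → ℝ, the ratio (∫_{ℝ^d ∖ K_ε} f(ξ) exp(ℓ(ξ)/ω) dξ) / Z(ω) tends to 0 as ω → 0⁺, where Z(ω) = ∫_{ℝ^d} exp(ℓ(ξ)/ω) dξ. -/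

import Mathlib

open MeasureTheory Real Filter

/-- The mass of the Gibbs measure outside the union of small balls around the global
maximizers vanishes as `ω → 0⁺`: for every continuous bounded `f`,
`(∫_{ℝ^d ∖ K_ε} f e^{ℓ/ω}) / Z(ω) → 0`. -/
theorem tail_mass_ratio_vanishes
    (d I : ℕ) (hI : 1 ≤ I)
    (ℓ : EuclideanSpace ℝ (Fin d) → ℝ) (hcont : Continuous ℓ) (hle : ∀ ξ, ℓ ξ ≤ 0)
    (ξs : Fin I → EuclideanSpace ℝ (Fin d)) (hinj : Function.Injective ξs)
    (hattain : {ξ | ℓ ξ = 0} = Set.range ξs)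
    (hint : ∀ ω : ℝ, 0 < ω → Integrable (fun ξ => Real.exp (ℓ ξ / ω)))
    (ε : ℝ) (hε : 0 < ε)
    (hsep : ∀ i j, i ≠ j → ε < dist (ξs i) (ξs j))
    (hout : ∃ η : ℝ, η < 0 ∧ ∀ ξ, ξ ∉ ⋃ i, Metric.ball (ξs i) ε → ℓ ξ ≤ η) :
    ∀ f : EuclideanSpace ℝ (Fin d) → ℝ, Continuous f → (∃ C, ∀ ξ, |f ξ| ≤ C) →
      Tendsto (fun ω : ℝ =>
          (∫ ξ in (⋃ i, Metric.ball (ξs i) ε)ᶜ, f ξ * Real.exp (ℓ ξ / ω)) /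
            ∫ ξ, Real.exp (ℓ ξ / ω))
        (nhdsWithin 0 (Set.Ioi 0)) (nhds 0) := by
  obtain ⟨η, hη, hηle⟩ := hout
  rintro f hf ⟨C, hC⟩
  have hC0 : 0 ≤ C := le_trans (abs_nonneg _) (hC 0)
  set K : Set (EuclideanSpace ℝ (Fin d)) := ⋃ i, Metric.ball (ξs i) ε with hK
  have hKmeas : MeasurableSet Kᶜ :=
    (isOpen_iUnion fun i => Metric.isOpen_ball).measurableSet.compl
  -- the maximizer
  have hξ1 : ℓ (ξs ⟨0, hI⟩) = 0 := by
    have : ξs ⟨0, hI⟩ ∈ Set.range ξs := ⟨_, rfl⟩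
    rw [← hattain] at this
    exact this
  set ξ₁ := ξs ⟨0, hI⟩ with hξ₁def
  set δ : ℝ := -η / 2 with hδdef
  have hδ : 0 < δ := by rw [hδdef]; linarith
  -- a small ball around ξ₁ on which ℓ > -δ
  have hopen : IsOpen {ξ : EuclideanSpace ℝ (Fin d) | -δ < ℓ ξ} :=
    isOpen_lt continuous_const hcont
  have hmem : ξ₁ ∈ {ξ : EuclideanSpace ℝ (Fin d) | -δ < ℓ ξ} := by
    simp only [Set.mem_setOf_eq, hξ1]; linarith
  obtain ⟨r, hr, hball⟩ := Metric.isOpen_iff.1 hopen ξ₁ hmem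
  set V : ℝ := (volume (Metric.ball ξ₁ r)).toReal with hVdef
  have hV : 0 < V := by
    rw [hVdef]
    exact ENNReal.toReal_pos (Metric.measure_ball_pos volume ξ₁ hr).ne'
      measure_ball_lt_top.ne
  set A : ℝ := ∫ ξ, Real.exp (ℓ ξ) with hAdef
  have hintA : Integrable (fun ξ => Real.exp (ℓ ξ)) := by
    have := hint 1 one_pos
    simpa using this
  have hA0 : 0 ≤ A := integral_nonneg fun ξ => (Real.exp_pos _).le
  set B : ℝ := C * A * Real.exp (-η) / V with hBdef
  have hB0 : 0 ≤ B := by positivity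
  -- the comparison function tends to 0
  have htend : Tendsto (fun ω : ℝ => B * Real.exp (η / (2 * ω)))
      (nhdsWithin 0 (Set.Ioi 0)) (nhds 0) := by
    have h1 : Tendsto (fun ω : ℝ => ω⁻¹) (nhdsWithin 0 (Set.Ioi 0)) atTop :=
      tendsto_inv_nhdsGT_zero
    have h2 : Tendsto (fun ω : ℝ => (η / 2) * ω⁻¹) (nhdsWithin 0 (Set.Ioi 0)) atBot := by
      apply Tendsto.const_mul_atTop_of_neg (by linarith : η / 2 < 0) h1
    have h3 : Tendsto (fun ω : ℝ => Real.exp ((η / 2) * ω⁻¹))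
        (nhdsWithin 0 (Set.Ioi 0)) (nhds 0) := Real.tendsto_exp_atBot.comp h2
    have h4 := h3.const_mul B
    rw [mul_zero] at h4
    convert h4 using 2 with ω
    congr 1
    rw [div_mul_eq_div_div]
    ring
  -- squeeze
  apply squeeze_zero_norm' _ htend
  have hIoo : Set.Ioo (0:ℝ) 1 ∈ nhdsWithin (0:ℝ) (Set.Ioi 0) :=
    Ioo_mem_nhdsGT_of_mem ⟨le_refl 0, one_pos⟩
  filter_upwards [hIoo] with ω hω
  obtain ⟨hω0, hω1⟩ := hω
  have hωne : ω ≠ 0 := ne_of_gt hω0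
  -- lower bound on the denominator
  have hZlow : V * Real.exp (-δ / ω) ≤ ∫ ξ, Real.exp (ℓ ξ / ω) := by
    have step1 : ∫ ξ in Metric.ball ξ₁ r, (Real.exp (-δ / ω)) ≤
        ∫ ξ in Metric.ball ξ₁ r, Real.exp (ℓ ξ / ω) := by
      apply setIntegral_mono_on
      · exact integrableOn_const measure_ball_lt_top.ne
      · exact (hint ω hω0).integrableOn
      · exact Metric.isOpen_ball.measurableSet
      · intro ξ hξ
        apply Real.exp_le_exp.2
        apply div_le_div_of_nonneg_right ?_ hω0.le
        · exact (hball hξ).le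
    have step2 : ∫ ξ in Metric.ball ξ₁ r, Real.exp (ℓ ξ / ω) ≤
        ∫ ξ, Real.exp (ℓ ξ / ω) :=
      setIntegral_le_integral (hint ω hω0)
        (Filter.Eventually.of_forall fun ξ => (Real.exp_pos _).le)
    have step0 : ∫ ξ in Metric.ball ξ₁ r, (Real.exp (-δ / ω)) = V * Real.exp (-δ / ω) := by
      rw [setIntegral_const, smul_eq_mul]
      rfl
    linarith
  have hZpos : 0 < ∫ ξ, Real.exp (ℓ ξ / ω) :=
    lt_of_lt_of_le (by positivity) hZlow
  -- upper bound on the numerator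
  have hprod : IntegrableOn (fun ξ => f ξ * Real.exp (ℓ ξ / ω)) Kᶜ := by
    apply Integrable.integrableOn
    apply (hint ω hω0).bdd_mul hf.aestronglyMeasurable
    exact Filter.Eventually.of_forall fun ξ => by rw [Real.norm_eq_abs]; exact hC ξ
  have hnum : ‖∫ ξ in Kᶜ, f ξ * Real.exp (ℓ ξ / ω)‖ ≤
      C * Real.exp (η * (1 / ω - 1)) * A := by
    calc ‖∫ ξ in Kᶜ, f ξ * Real.exp (ℓ ξ / ω)‖
        ≤ ∫ ξ in Kᶜ, ‖f ξ * Real.exp (ℓ ξ / ω)‖ := norm_integral_le_integral_norm _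
      _ ≤ ∫ ξ in Kᶜ, C * Real.exp (η * (1 / ω - 1)) * Real.exp (ℓ ξ) := by
          apply setIntegral_mono_on hprod.norm
            ((hintA.const_mul _).integrableOn) hKmeas
          intro ξ hξ
          have hℓη : ℓ ξ ≤ η := hηle ξ hξ
          have hfac : (0:ℝ) ≤ 1 / ω - 1 := by
            have : (1:ℝ) ≤ 1 / ω := by rw [le_div_iff₀ hω0]; linarith
            linarith
          have hexp : Real.exp (ℓ ξ / ω) ≤
              Real.exp (η * (1 / ω - 1)) * Real.exp (ℓ ξ) := by
            rw [← Real.exp_add]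
            apply Real.exp_le_exp.2
            have : ℓ ξ * (1 / ω - 1) ≤ η * (1 / ω - 1) :=
              mul_le_mul_of_nonneg_right hℓη hfac
            have heq : ℓ ξ / ω = ℓ ξ * (1 / ω - 1) + ℓ ξ := by field_simp; ring
            linarith
          rw [norm_mul, Real.norm_eq_abs, Real.norm_eq_abs,
            abs_of_pos (Real.exp_pos _)]
          calc |f ξ| * Real.exp (ℓ ξ / ω)
              ≤ C * (Real.exp (η * (1 / ω - 1)) * Real.exp (ℓ ξ)) :=
                mul_le_mul (hC ξ) hexp (Real.exp_pos _).le hC0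
            _ = C * Real.exp (η * (1 / ω - 1)) * Real.exp (ℓ ξ) := by ring
      _ = C * Real.exp (η * (1 / ω - 1)) * ∫ ξ in Kᶜ, Real.exp (ℓ ξ) := by
          rw [integral_const_mul]
      _ ≤ C * Real.exp (η * (1 / ω - 1)) * A := by
          apply mul_le_mul_of_nonneg_left
            (setIntegral_le_integral hintA
              (Filter.Eventually.of_forall fun ξ => (Real.exp_pos _).le))
            (by positivity)
  -- combine
  rw [norm_div, Real.norm_eq_abs (∫ ξ, Real.exp (ℓ ξ / ω)),
    abs_of_pos hZpos]
  calc ‖∫ ξ in Kᶜ, f ξ * Real.exp (ℓ ξ / ω)‖ / ∫ ξ, Real.exp (ℓ ξ / ω)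
      ≤ (C * Real.exp (η * (1 / ω - 1)) * A) / (V * Real.exp (-δ / ω)) :=
        div_le_div₀ (by positivity) hnum (by positivity) hZlow
    _ = B * Real.exp (η / (2 * ω)) := by
        have e1 : Real.exp (η * (1 / ω - 1)) =
            Real.exp (-η) * Real.exp (η / (2 * ω)) * Real.exp (-δ / ω) := by
          rw [← Real.exp_add, ← Real.exp_add]
          congr 1
          rw [hδdef]
          field_simp
          ring
        rw [hBdef, e1]
        field_simp
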